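/- If A is a perinormal AGCD domain, then A is integrally closed. -/

import Mathlib

open scoped nonZeroDivisors

section Defs

variable (A : Type*) [CommRing A] [IsDomain A]

/-- The localization of `A` at the prime `P`, realized as a subset of the `A`-algebra `K`. -/
def locSet (K : Type*) [CommRing K] [Algebra A K] (P : Ideal A) : Set K :=
  {x | ∃ a s : A, s ∉ P ∧ x * algebraMap A K s = algebraMap A K a}

/-- `P` is a valued prime of `A` if `A_P` is a valuation domain. -/
def ValuedPrime (P : Ideal A) : Prop :=
  ∃ h : P.IsPrime, ValuationRing (Localization.AtPrime P)

/-- `A` is an essential domain if it is the intersection of its localizations at valued primes. -/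
def IsEssential : Prop :=
  Set.range (algebraMap A (FractionRing A)) =
    ⋂ P ∈ {P : Ideal A | ValuedPrime A P}, locSet A (FractionRing A) P

/-- An overring `B` of `A` is a lying over overring if `Spec B → Spec A` is surjective. -/
def LyingOverOverring (B : Subalgebra A (FractionRing A)) : Prop :=
  ∀ P : Ideal A, P.IsPrime → ∃ Q : Ideal B, Q.IsPrime ∧ Q.comap (algebraMap A B) = P

/-- An overring `B` of `A` is a going down overring if going down holds for `A ⊆ B`. -/
def GoingDownOverring (B : Subalgebra A (FractionRing A)) : Prop :=
  ∀ P' P : Ideal A, P'.IsPrime → P.IsPrime → P' ≤ P →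
    ∀ Q : Ideal B, Q.IsPrime → Q.comap (algebraMap A B) = P →
      ∃ Q' : Ideal B, Q'.IsPrime ∧ Q' ≤ Q ∧ Q'.comap (algebraMap A B) = P'

/-- `A` is perinormal if every going down overring of `A` is a flat `A`-module. -/
def Perinormal : Prop :=
  ∀ B : Subalgebra A (FractionRing A), GoingDownOverring A B → Module.Flat A B

/-- `A` is globally perinormal if every going down overring of `A` is a fraction ring of `A`. -/
def GloballyPerinormal : Prop :=
  ∀ B : Subalgebra A (FractionRing A), GoingDownOverring A B →
    ∃ S : Submonoid A, IsLocalization S B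

/-- `A` is a P-domain if `A_P` is a valuation domain for each prime `P` minimal over an ideal
of the form `(Aa : b)`. -/
def IsPDomain : Prop :=
  ∀ P : Ideal A,
    (∃ a b : A, P ∈ ((Ideal.span {a} : Ideal A).colon (Ideal.span {b})).minimalPrimes) →
      ValuedPrime A P

/-- `A` is a PVMD if for every finitely generated nonzero ideal `I` there is a finitely
generated nonzero ideal `J` with `(IJ)_v` principal. -/
def IsPVMD : Prop :=
  ∀ I : Ideal A, I ≠ ⊥ → I.FG → ∃ J : Ideal A, J ≠ ⊥ ∧ J.FG ∧
    ∃ x : FractionRing A,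
      1 / (1 / ((I : FractionalIdeal A⁰ (FractionRing A)) * (J : FractionalIdeal A⁰ (FractionRing A)))) =
        FractionalIdeal.spanSingleton A⁰ x

/-- `A` is treed if incomparable primes of `A` are comaximal. -/
def Treed : Prop :=
  ∀ P Q : Ideal A, P.IsPrime → Q.IsPrime → ¬ P ≤ Q → ¬ Q ≤ P → P ⊔ Q = ⊤

/-- `A` is a Prüfer domain if all its localizations at maximal ideals are valuation domains. -/
def IsPrueferDom : Prop :=
  ∀ M : Ideal A, M.IsMaximal → ValuedPrime A M

/-- The set of height one primes of `A`. -/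
def HtOnePrimes : Set (Ideal A) :=
  {P : Ideal A | P.IsPrime ∧ P ≠ ⊥ ∧ ∀ Q : Ideal A, Q.IsPrime → Q < P → Q = ⊥}

/-- `A` is a generalized Krull domain. -/
def IsGenKrull : Prop :=
  (Set.range (algebraMap A (FractionRing A)) =
      ⋂ P ∈ HtOnePrimes A, locSet A (FractionRing A) P) ∧
  (∀ a : A, a ≠ 0 → {P ∈ HtOnePrimes A | a ∈ P}.Finite) ∧
  (∀ P ∈ HtOnePrimes A, ValuedPrime A P)

/-- `A` is an almost GCD domain. -/
def IsAGCD : Prop :=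
  ∀ x y : A, ∃ n : ℕ, 1 ≤ n ∧
    ∃ z : A, Ideal.span {x ^ n} ⊓ Ideal.span {y ^ n} = Ideal.span {z}

/-- `A` has torsion class group (stated for a PVMD): every finitely generated nonzero
fractional ideal has a power whose `v`-closure is principal. -/
def TorsionClassGroup : Prop :=
  ∀ H : FractionalIdeal A⁰ (FractionRing A), H ≠ 0 →
    (H : Submodule A (FractionRing A)).FG →
      ∃ n : ℕ, 1 ≤ n ∧ ∃ x : FractionRing A,
        1 / (1 / (H ^ n)) = FractionalIdeal.spanSingleton A⁰ x

/-- An overring `B` of `A` is t-linked over `A`. -/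
def TLinked (B : Subalgebra A (FractionRing A)) : Prop :=
  ∀ I : Ideal A, I ≠ ⊥ → I.FG →
    ({x : FractionRing A | ∀ y ∈ I, x * algebraMap A (FractionRing A) y ∈
        Set.range (algebraMap A (FractionRing A))} =
      Set.range (algebraMap A (FractionRing A))) →
    ({x : FractionRing A | ∀ y ∈ I, x * algebraMap A (FractionRing A) y ∈ (B : Set (FractionRing A))} =
      (B : Set (FractionRing A)))

end Defs

section AuxProof
set_option linter.unusedSectionVars false
set_option linter.unusedVariables false
variable {A : Type*} [CommRing A] [IsDomain A]
variable {A : Type*} [CommRing A] [IsDomain A]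

lemma aux_dvd_of_dvd_pow_mul {a b : A} (h : ∀ t : A, a ∣ b * t → a ∣ t) :
    ∀ (k : ℕ) (t : A), a ∣ b ^ k * t → a ∣ t := by
  intro k
  induction k with
  | zero => intro t ht; simpa using ht
  | succ k ih =>
    intro t ht
    rw [pow_succ, mul_assoc] at ht
    exact h t (ih (b * t) ht)

lemma aux_agcd_root {K : Type*} [Field K] [Algebra A K] [IsFractionRing A K]
    (hA : ∀ x y : A, ∃ n : ℕ, 1 ≤ n ∧
      ∃ z : A, Ideal.span {x ^ n} ⊓ Ideal.span {y ^ n} = Ideal.span {z})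
    (x : K) (hx : IsIntegral A x) :
    ∃ n : ℕ, 1 ≤ n ∧ ∃ u : A, x ^ n = algebraMap A K u := by
  have inj : Function.Injective (algebraMap A K) := IsFractionRing.injective A K
  by_cases hx0 : x = 0
  · exact ⟨1, le_refl 1, 0, by simp [hx0]⟩
  obtain ⟨⟨a, s⟩, hxs⟩ := IsLocalization.surj A⁰ x
  simp only at hxs
  have hs0 : (s : A) ≠ 0 := nonZeroDivisors.coe_ne_zero s
  have ha0 : a ≠ 0 := by
    rintro rfl
    rw [map_zero] at hxs
    rcases mul_eq_zero.mp hxs with h | h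
    · exact hx0 h
    · exact hs0 (inj (by rwa [map_zero]))
  obtain ⟨n, hn1, z, hz⟩ := hA a (s : A)
  obtain ⟨a₁, hza⟩ : a ^ n ∣ z := by
    have := hz ▸ Ideal.mem_span_singleton_self z
    exact Ideal.mem_span_singleton.mp (Ideal.mem_inf.mp this).1
  obtain ⟨b₁, hzb⟩ : (s : A) ^ n ∣ z := by
    have := hz ▸ Ideal.mem_span_singleton_self z
    exact Ideal.mem_span_singleton.mp (Ideal.mem_inf.mp this).2
  obtain ⟨d, hd⟩ : z ∣ a ^ n * (s : A) ^ n := by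
    rw [← Ideal.mem_span_singleton, ← hz]
    exact Ideal.mem_inf.mpr ⟨Ideal.mem_span_singleton.mpr ⟨(s:A)^n, rfl⟩,
      Ideal.mem_span_singleton.mpr ⟨a^n, mul_comm _ _⟩⟩
  have hd0 : d ≠ 0 := by
    rintro rfl
    rw [mul_zero] at hd
    exact (mul_ne_zero (pow_ne_zero n ha0) (pow_ne_zero n hs0)) hd
  have hsn : (s : A) ^ n = a₁ * d := by
    have h1 : a ^ n * ((s:A) ^ n) = a ^ n * (a₁ * d) := by
      rw [hd, hza]; ring
    exact mul_left_cancel₀ (pow_ne_zero n ha0) h1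
  have han : a ^ n = b₁ * d := by
    have h1 : (s:A) ^ n * (a ^ n) = (s:A) ^ n * (b₁ * d) := by
      rw [mul_comm ((s:A)^n) (a^n), hd, hzb]; ring
    exact mul_left_cancel₀ (pow_ne_zero n hs0) h1
  have hb₁0 : b₁ ≠ 0 := by
    rintro rfl; rw [zero_mul] at han; exact pow_ne_zero n ha0 han
  have key : ∀ t : A, a₁ ∣ b₁ * t → a₁ ∣ t := by
    rintro t ⟨e, he⟩
    obtain ⟨w, hw⟩ : z ∣ b₁ * t * d := by
      rw [← Ideal.mem_span_singleton, ← hz]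
      refine Ideal.mem_inf.mpr ⟨Ideal.mem_span_singleton.mpr ⟨t, ?_⟩,
        Ideal.mem_span_singleton.mpr ⟨e, ?_⟩⟩
      · rw [han]; ring
      · rw [hsn, he]; ring
    refine ⟨w, ?_⟩
    have h1 : (b₁ * d) * t = (b₁ * d) * (a₁ * w) := by
      rw [show b₁ * d * t = b₁ * t * d by ring, hw, hza, han]; ring
    exact mul_left_cancel₀ (mul_ne_zero hb₁0 hd0) h1
  have hd0' : algebraMap A K d ≠ 0 := fun h => hd0 (inj (by rwa [map_zero]))
  have hxn : x ^ n * algebraMap A K a₁ = algebraMap A K b₁ := by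
    have h1 : x ^ n * algebraMap A K ((s:A) ^ n) = algebraMap A K (a ^ n) := by
      rw [map_pow, map_pow, ← mul_pow, hxs]
    rw [hsn, han, map_mul, map_mul, ← mul_assoc] at h1
    exact mul_right_cancel₀ hd0' h1
  obtain ⟨p, pmonic, hp⟩ := hx.pow n
  have qmonic : (p.scaleRoots a₁).Monic := (Polynomial.monic_scaleRoots_iff a₁).mpr pmonic
  have hqe : Polynomial.eval₂ (algebraMap A K) (algebraMap A K a₁ * x ^ n) (p.scaleRoots a₁) = 0 :=
    Polynomial.scaleRoots_eval₂_eq_zero (algebraMap A K) hp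
  rw [mul_comm, hxn] at hqe
  have hqb : (p.scaleRoots a₁).eval b₁ = 0 := by
    apply inj
    rw [map_zero, ← Polynomial.eval₂_at_apply]
    exact hqe
  have hqdeg : (p.scaleRoots a₁).natDegree = p.natDegree := Polynomial.natDegree_scaleRoots p a₁
  have hdvd : a₁ ∣ b₁ ^ p.natDegree := by
    have h1 := Polynomial.eval_eq_sum_range (p := p.scaleRoots a₁) b₁
    rw [hqb, Finset.sum_range_succ, qmonic.coeff_natDegree, one_mul, hqdeg] at h1
    have h2 : b₁ ^ p.natDegree = -∑ i ∈ Finset.range p.natDegree,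
        (p.scaleRoots a₁).coeff i * b₁ ^ i := by linear_combination -h1
    rw [h2]
    refine dvd_neg.mpr (Finset.dvd_sum ?_)
    intro i hi
    rw [Polynomial.coeff_scaleRoots]
    exact ((dvd_pow_self a₁ (by have := Finset.mem_range.mp hi; omega)).mul_left
      (p.coeff i)).mul_right _
  obtain ⟨e, he⟩ : a₁ ∣ 1 := aux_dvd_of_dvd_pow_mul key p.natDegree 1 (by rwa [mul_one])
  refine ⟨n, hn1, b₁ * e, ?_⟩
  rw [map_mul, ← hxn]
  have : algebraMap A K a₁ * algebraMap A K e = 1 := by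
    rw [← map_mul, ← he, map_one]
  calc x ^ n = x ^ n * (algebraMap A K a₁ * algebraMap A K e) := by rw [this, mul_one]
    _ = x ^ n * algebraMap A K a₁ * algebraMap A K e := by ring

lemma aux_exists_prime_over (P : Ideal A) (hP : P.IsPrime) :
    ∃ Q : Ideal (integralClosure A (FractionRing A)), Q.IsPrime ∧
      Q.comap (algebraMap A (integralClosure A (FractionRing A))) = P := by
  haveI := hP
  have hinj : Function.Injective (algebraMap A (integralClosure A (FractionRing A))) := by
    intro u v h
    apply IsFractionRing.injective A (FractionRing A)
    exact congrArg Subtype.val h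
  obtain ⟨Q, -, hQ, hQ'⟩ := Ideal.exists_ideal_over_prime_of_isIntegral P ⊥
    (by rw [Ideal.comap_bot_of_injective _ hinj]; exact bot_le)
  exact ⟨Q, hQ, hQ'⟩

set_option synthInstance.maxHeartbeats 1000000 in
set_option maxHeartbeats 1000000 in
lemma aux_flat_elem (hflat : Module.Flat A (integralClosure A (FractionRing A)))
    (x : FractionRing A) (hx : IsIntegral A x) :
    ∃ y : A, algebraMap A (FractionRing A) y = x := by
  haveI := hflat
  by_contra hcon
  push_neg at hcon
  obtain ⟨⟨a, s⟩, hxs⟩ := IsLocalization.surj A⁰ x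
  simp only at hxs
  have hxmem : x ∈ integralClosure A (FractionRing A) := hx
  set xB : integralClosure A (FractionRing A) := ⟨x, hxmem⟩ with hxB
  have hrel : ∑ i : ULift.{0} (Fin 2), (fun i : ULift.{0} (Fin 2) => ![(s : A), -a] i.down) i •
      (fun i : ULift.{0} (Fin 2) => ![xB, 1] i.down) i = 0 := by
    rw [← Equiv.ulift.symm.sum_comp]
    rw [Fin.sum_univ_two]
    simp only [Equiv.ulift, Equiv.coe_fn_symm_mk, Matrix.cons_val_zero, Matrix.cons_val_one,
      Matrix.head_cons]
    apply Subtype.ext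
    push_cast
    rw [Algebra.smul_def, Algebra.smul_def]
    simp only [Subalgebra.coe_algebraMap, map_neg, mul_one]
    rw [mul_comm] at hxs
    rw [hxs]
    ring
  obtain ⟨κ, aM, y, hxy, hrel2⟩ := Module.Flat.isTrivialRelation_of_sum_smul_eq_zero hrel
  have h1 : (1 : integralClosure A (FractionRing A)) = ∑ j, aM ⟨1⟩ j • y j := by
    have := hxy ⟨1⟩
    simpa using this
  have hcoef : ∀ j, (s : A) * aM ⟨0⟩ j = a * aM ⟨1⟩ j := by
    intro j
    have h2 := hrel2 j
    rw [← Equiv.ulift.symm.sum_comp, Fin.sum_univ_two] at h2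
    simp only [Equiv.ulift, Equiv.coe_fn_symm_mk, Matrix.cons_val_zero, Matrix.cons_val_one,
      Matrix.head_cons] at h2
    linear_combination h2
  have hmulin : ∀ j, x * algebraMap A (FractionRing A) (aM ⟨1⟩ j)
      = algebraMap A (FractionRing A) (aM ⟨0⟩ j) := by
    intro j
    have hs0 : algebraMap A (FractionRing A) (s : A) ≠ 0 := by
      intro h
      exact nonZeroDivisors.coe_ne_zero s
        (IsFractionRing.injective A (FractionRing A) (by rwa [map_zero]))
    apply mul_left_cancel₀ hs0
    calc algebraMap A (FractionRing A) (s:A) * (x * algebraMap A (FractionRing A) (aM ⟨1⟩ j))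
        = (x * algebraMap A (FractionRing A) (s:A)) * algebraMap A (FractionRing A) (aM ⟨1⟩ j) := by
          ring
      _ = algebraMap A (FractionRing A) (a * aM ⟨1⟩ j) := by rw [hxs, map_mul]
      _ = algebraMap A (FractionRing A) ((s:A) * aM ⟨0⟩ j) := by rw [← hcoef j]
      _ = algebraMap A (FractionRing A) (s:A) * algebraMap A (FractionRing A) (aM ⟨0⟩ j) := by
          rw [map_mul]
  let I : Ideal A :=
  { carrier := {t : A | ∃ c : A, x * algebraMap A (FractionRing A) t
      = algebraMap A (FractionRing A) c}
    add_mem' := by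
      rintro t₁ t₂ ⟨c₁, h₁⟩ ⟨c₂, h₂⟩
      exact ⟨c₁ + c₂, by rw [map_add, map_add, mul_add, h₁, h₂]⟩
    zero_mem' := ⟨0, by simp⟩
    smul_mem' := by
      rintro r t ⟨c, h⟩
      exact ⟨r * c, by rw [smul_eq_mul, map_mul, map_mul, mul_left_comm, h]⟩ }
  have hInt : I ≠ ⊤ := by
    intro h
    obtain ⟨c, hc⟩ : (1 : A) ∈ I := h ▸ Submodule.mem_top
    rw [map_one, mul_one] at hc
    exact hcon c hc.symm
  obtain ⟨M, hM, hIM⟩ := Ideal.exists_le_maximal I hInt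
  obtain ⟨Q, hQp, hQc⟩ := aux_exists_prime_over M hM.isPrime
  apply hQp.ne_top
  rw [Ideal.eq_top_iff_one, h1]
  refine Ideal.sum_mem Q ?_
  intro j _
  rw [Algebra.smul_def]
  refine Ideal.mul_mem_right _ Q ?_
  have hj : aM ⟨1⟩ j ∈ M := hIM ⟨aM ⟨0⟩ j, hmulin j⟩
  rw [← hQc] at hj
  exact hj

lemma aux_gd (hA : IsAGCD A) :
    GoingDownOverring A (integralClosure A (FractionRing A)) := by
  intro P' P hP' hP hle Q hQ hQP
  obtain ⟨Q', hQ'p, hQ'c⟩ := aux_exists_prime_over P' hP'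
  refine ⟨Q', hQ'p, ?_, hQ'c⟩
  intro b hb
  obtain ⟨n, hn, u, hu⟩ := aux_agcd_root hA (b : FractionRing A) b.2
  have hb' : algebraMap A (integralClosure A (FractionRing A)) u = b ^ n := by
    apply Subtype.ext
    push_cast
    exact hu.symm
  have hu1 : u ∈ P' := by
    rw [← hQ'c]
    show algebraMap A (integralClosure A (FractionRing A)) u ∈ Q'
    rw [hb']
    exact Ideal.pow_mem_of_mem Q' hb n (by omega)
  have hu2 : algebraMap A (integralClosure A (FractionRing A)) u ∈ Q := by
    rw [← hQP] at hle
    exact hle hu1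
  rw [hb'] at hu2
  exact hQ.mem_of_pow_mem n hu2

end AuxProof

/-- a perinormal AGCD domain is integrally closed. -/
theorem perinormal_agcd_integrally_closed (A : Type*) [CommRing A] [IsDomain A]
    (hA : IsAGCD A) (hperi : Perinormal A) : IsIntegrallyClosed A := by
  rw [isIntegrallyClosed_iff (FractionRing A)]
  intro x hx
  exact aux_flat_elem (hperi _ (aux_gd hA)) x hx
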